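/- Under the standing assumptions, every full walk from i to j on the trellis digraph 𝒯_{Γ(k)} that passes through node 1 (i.e. visits some node 1:l) has weight at most w_i* + v_j*. -/

import Mathlib

/-
Common framework for "A bound for the rank-one transient of inhomogeneous matrix
products in special case" (Kennedy-Cochran-Patrick, Sergeev, Berežný).

We work over the max-plus semiring, modelled inside `EReal` (so `⊥ = -∞` is the
max-plus zero and ordinary addition is the max-plus multiplication).  Matrices are
functions `Fin m → Fin m → EReal`.  The distinguished node "1" of the paper is the
node `0 : Fin (n+2)` (so that `n + 2 ≥ 2` plays the role of the paper's `n ≥ 2`).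

A walk is a nonempty list of nodes.  Walks on the trellis digraph of the product
`A 1 ⊗ ⋯ ⊗ A k` additionally record the level at which they start: the arc from the
`(l-1)`-st to the `l`-th node of a walk starting at level `s` has weight given by the
matrix `A (s + l)`.
-/

open scoped Classical

noncomputable section

namespace MaxPlusTransient

variable {m : ℕ}

/-- Weight of a walk on the trellis digraph, starting at level `s`. -/
def tw (M : ℕ → Fin m → Fin m → EReal) : ℕ → List (Fin m) → EReal
  | _, [] => 0
  | _, [_] => 0
  | s, a :: b :: t => M (s + 1) a b + tw M (s + 1) (b :: t)

/-- Being a walk on the trellis digraph, starting at level `s` (all traversed arcs exist,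
i.e. have weight `≠ -∞`); a walk is a nonempty list of nodes. -/
def twalk (M : ℕ → Fin m → Fin m → EReal) : ℕ → List (Fin m) → Prop
  | _, [] => False
  | _, [_] => True
  | s, a :: b :: t => M (s + 1) a b ≠ ⊥ ∧ twalk M (s + 1) (b :: t)

/-- Weight of a walk on the digraph `D_A` of a single matrix `A`. -/
def wWeight (A : Fin m → Fin m → EReal) (W : List (Fin m)) : EReal :=
  tw (fun _ => A) 0 W

/-- Being a walk on the digraph `D_A` of a matrix `A`. -/
def isWalk (A : Fin m → Fin m → EReal) (W : List (Fin m)) : Prop :=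
  twalk (fun _ => A) 0 W

/-- A path is a walk with no repeated nodes. -/
def isPath (A : Fin m → Fin m → EReal) (W : List (Fin m)) : Prop :=
  isWalk A W ∧ W.Nodup

/-- A cycle is a walk of length (number of arcs) at least one whose first and last
nodes coincide. -/
def isCycle (A : Fin m → Fin m → EReal) (W : List (Fin m)) : Prop :=
  isWalk A W ∧ 2 ≤ W.length ∧ W.head? = W.getLast?

/-- A matrix is irreducible iff its digraph is strongly connected. -/
def irreducible (A : Fin m → Fin m → EReal) : Prop :=
  ∀ i j : Fin m, ∃ W, isWalk A W ∧ W.head? = some i ∧ W.getLast? = some j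

/-- Geometric equivalence: the digraphs have the same arcs. -/
def geomEq (A B : Fin m → Fin m → EReal) : Prop :=
  ∀ i j, A i j = ⊥ ↔ B i j = ⊥

/-- Max-plus matrix product. -/
def mp (A B : Fin m → Fin m → EReal) : Fin m → Fin m → EReal :=
  fun i j => ⨆ s, A i s + B s j

/-- `Gamma M k = M 1 ⊗ M 2 ⊗ ⋯ ⊗ M k` (max-plus product), with `Gamma M 0` the
max-plus identity matrix. -/
def Gamma (M : ℕ → Fin m → Fin m → EReal) : ℕ → Fin m → Fin m → EReal
  | 0 => fun i j => if i = j then 0 else ⊥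
  | k + 1 => mp (Gamma M k) (M (k + 1))

/-- An initial walk from `i` to `one` on the trellis digraph of `M 1 ⊗ ⋯ ⊗ M k`:
it starts at node `i` at level `0`, ends at node `one` at some level `≤ k`, and the
only node of the walk equal to `one` is its final node. -/
def isInitialWalk (M : ℕ → Fin m → Fin m → EReal) (one : Fin m) (k : ℕ) (i : Fin m)
    (W : List (Fin m)) : Prop :=
  twalk M 0 W ∧ W.length - 1 ≤ k ∧ W.head? = some i ∧ W.getLast? = some one ∧
    ∀ v ∈ W.dropLast, v ≠ one

/-- A final walk from `one` to `j` on the trellis digraph of `M 1 ⊗ ⋯ ⊗ M k`: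
it starts at node `one` at some level `s`, ends at node `j` at level `k`, and the
only node of the walk equal to `one` is its first node. -/
def isFinalWalk (M : ℕ → Fin m → Fin m → EReal) (one : Fin m) (k : ℕ) (j : Fin m) (s : ℕ)
    (W : List (Fin m)) : Prop :=
  twalk M s W ∧ s + (W.length - 1) = k ∧ W.head? = some one ∧ W.getLast? = some j ∧
    ∀ v ∈ W.tail, v ≠ one

/-- A full walk from `i` to `j` on the trellis digraph of `M 1 ⊗ ⋯ ⊗ M k`: it goes
from node `i` at level `0` to node `j` at level `k`. -/
def isFullWalk (M : ℕ → Fin m → Fin m → EReal) (k : ℕ) (i j : Fin m)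
    (W : List (Fin m)) : Prop :=
  twalk M 0 W ∧ W.length = k + 1 ∧ W.head? = some i ∧ W.getLast? = some j

/-- `w_i*`: maximal weight of an initial walk from `i` to `one`. -/
def wStar (M : ℕ → Fin m → Fin m → EReal) (one : Fin m) (k : ℕ) (i : Fin m) : EReal :=
  sSup {x : EReal | ∃ W, isInitialWalk M one k i W ∧ x = tw M 0 W}

/-- `v_j*`: maximal weight of a final walk from `one` to `j`. -/
def vStar (M : ℕ → Fin m → Fin m → EReal) (one : Fin m) (k : ℕ) (j : Fin m) : EReal :=
  sSup {x : EReal | ∃ s W, isFinalWalk M one k j s W ∧ x = tw M s W}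

/-- `α_i`: maximal weight of a path on `D_A` from `i` to `one`. -/
def alphaE (A : Fin m → Fin m → EReal) (one : Fin m) (i : Fin m) : EReal :=
  sSup {x : EReal | ∃ W, isPath A W ∧ W.head? = some i ∧ W.getLast? = some one ∧
    x = wWeight A W}

/-- `β_j`: maximal weight of a path on `D_A` from `one` to `j`. -/
def betaE (A : Fin m → Fin m → EReal) (one : Fin m) (j : Fin m) : EReal :=
  sSup {x : EReal | ∃ W, isPath A W ∧ W.head? = some one ∧ W.getLast? = some j ∧
    x = wWeight A W}

/-- `γ_{i,j}`: maximal weight of a path on `D_A` from `i` to `j` not passing through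
`one` (`-∞` if no such path exists). -/
def gammaE (A : Fin m → Fin m → EReal) (one : Fin m) (i j : Fin m) : EReal :=
  sSup {x : EReal | ∃ W, isPath A W ∧ W.head? = some i ∧ W.getLast? = some j ∧
    (∀ v ∈ W, v ≠ one) ∧ x = wWeight A W}

/-- The set of mean weights of cycles of `D_A` avoiding the node `one`. -/
def lamSet (A : Fin m → Fin m → EReal) (one : Fin m) : Set ℝ :=
  {x : ℝ | ∃ W, isCycle A W ∧ (∀ v ∈ W, v ≠ one) ∧
    ∃ r : ℝ, wWeight A W = (r : EReal) ∧ x = r / ((W.length : ℝ) - 1)}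

/-- `λ*`: the supremum of the mean weights of cycles of `D_A` avoiding `one`. -/
def lamStar (A : Fin m → Fin m → EReal) (one : Fin m) : ℝ :=
  sSup (lamSet A one)

/-- `w_i`: maximal weight of a walk of length at most `k` from `i` to `one` on `D_A`. -/
def wInf (A : Fin m → Fin m → EReal) (one : Fin m) (k : ℕ) (i : Fin m) : EReal :=
  sSup {x : EReal | ∃ W, isWalk A W ∧ W.length - 1 ≤ k ∧ W.head? = some i ∧
    W.getLast? = some one ∧ x = wWeight A W}

/-- `v_j`: maximal weight of a walk of length at most `k` from `one` to `j` on `D_A`. -/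
def vInf (A : Fin m → Fin m → EReal) (one : Fin m) (k : ℕ) (j : Fin m) : EReal :=
  sSup {x : EReal | ∃ W, isWalk A W ∧ W.length - 1 ≤ k ∧ W.head? = some one ∧
    W.getLast? = some j ∧ x = wWeight A W}

/-- The standing assumptions of the paper on the set `𝒳` and its entrywise boundaries
`Asup` (supremum) and `Ainf` (infimum):
matrices of `𝒳` have no `+∞` entries, `Asup`/`Ainf` are the entrywise sup/inf,
`Asup` has no `+∞` entries and `Ainf` has no `-∞` entries where matrices of `𝒳` are
finite; all matrices of `𝒳` and also `Ainf` are irreducible and pairwise geometrically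
equivalent; every matrix of `𝒳` and also `Asup` has `(one, one)` entry `0` and all its
cycles other than (repetitions of) the loop at `one` have strictly negative (mean)
weight. -/
def Standing (𝒳 : Set (Fin m → Fin m → EReal)) (Asup Ainf : Fin m → Fin m → EReal)
    (one : Fin m) : Prop :=
  𝒳.Nonempty ∧
  (∀ X ∈ 𝒳, ∀ i j, X i j ≠ ⊤) ∧
  (∀ i j, Asup i j = ⨆ X ∈ 𝒳, X i j) ∧
  (∀ i j, Ainf i j = ⨅ X ∈ 𝒳, X i j) ∧
  (∀ i j, Asup i j ≠ ⊤) ∧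
  (∀ X ∈ 𝒳, ∀ i j, X i j ≠ ⊥ → Ainf i j ≠ ⊥) ∧
  (∀ X ∈ 𝒳, irreducible X) ∧
  irreducible Ainf ∧
  (∀ X ∈ 𝒳, geomEq X Ainf) ∧
  (∀ X ∈ 𝒳, X one one = 0) ∧
  (∀ X ∈ 𝒳, ∀ W, isCycle X W → (∃ v ∈ W, v ≠ one) → wWeight X W < 0) ∧
  Asup one one = 0 ∧
  (∀ W, isCycle Asup W → (∃ v ∈ W, v ≠ one) → wWeight Asup W < 0)

lemma tw_split (M : ℕ → Fin m → Fin m → EReal) :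
    ∀ (L1 : List (Fin m)) (x : Fin m) (L2 : List (Fin m)) (s : ℕ),
      tw M s (L1 ++ x :: L2) = tw M s (L1 ++ [x]) + tw M (s + L1.length) (x :: L2) := by
  intro L1
  induction L1 with
  | nil => intro x L2 s; simp [tw]
  | cons a T ih =>
    intro x L2 s
    cases T with
    | nil =>
      cases L2 with
      | nil => simp [tw]
      | cons c L2' => simp [tw, add_assoc]
    | cons b T' =>
      have h := ih x L2 (s + 1)
      simp only [List.cons_append, tw, List.length_cons, List.append_eq] at h ⊢
      have e : s + (T'.length + 1 + 1) = s + 1 + (T'.length + 1) := by omega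
      rw [e, h]
      exact (add_assoc _ _ _).symm

lemma twalk_split (M : ℕ → Fin m → Fin m → EReal) :
    ∀ (L1 : List (Fin m)) (x : Fin m) (L2 : List (Fin m)) (s : ℕ),
      twalk M s (L1 ++ x :: L2) →
      twalk M s (L1 ++ [x]) ∧ twalk M (s + L1.length) (x :: L2) := by
  intro L1
  induction L1 with
  | nil => intro x L2 s h; exact ⟨trivial, by simpa using h⟩
  | cons a T ih =>
    intro x L2 s h
    cases T with
    | nil =>
      cases L2 with
      | nil => exact ⟨by simpa using h, trivial⟩
      | cons c L2' =>
        simp only [List.nil_append, List.cons_append, twalk] at h ⊢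
        exact ⟨⟨h.1, trivial⟩, by simpa using h.2⟩
    | cons b T' =>
      simp only [List.cons_append, twalk, List.length_cons] at h ⊢
      obtain ⟨h1, h2⟩ := h
      obtain ⟨h3, h4⟩ := ih x L2 (s + 1) h2
      refine ⟨⟨h1, h3⟩, ?_⟩
      simp only [List.length_cons] at h4
      have : s + (T'.length + 1 + 1) = s + 1 + (T'.length + 1) := by omega
      rw [this]
      exact h4

lemma tw_shift (N : Fin m → Fin m → EReal) :
    ∀ (L : List (Fin m)) (s t : ℕ), tw (fun _ => N) s L = tw (fun _ => N) t L := by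
  intro L
  induction L with
  | nil => intros; rfl
  | cons a T ih =>
    intro s t
    cases T with
    | nil => rfl
    | cons b T' => simp only [tw]; rw [ih (s+1) (t+1)]

lemma twalk_shift (N : Fin m → Fin m → EReal) :
    ∀ (L : List (Fin m)) (s t : ℕ), twalk (fun _ => N) s L → twalk (fun _ => N) t L := by
  intro L
  induction L with
  | nil => intro s t h; exact h
  | cons a T ih =>
    intro s t h
    cases T with
    | nil => trivial
    | cons b T' =>
      simp only [twalk] at h ⊢
      exact ⟨h.1, ih (s+1) (t+1) h.2⟩

lemma tw_le_const (A : ℕ → Fin m → Fin m → EReal) (N : Fin m → Fin m → EReal) (k : ℕ)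
    (hbd : ∀ l, 1 ≤ l → l ≤ k → ∀ a b, A l a b ≤ N a b) :
    ∀ (L : List (Fin m)) (s : ℕ), s + L.length ≤ k + 1 → tw A s L ≤ tw (fun _ => N) s L := by
  intro L
  induction L with
  | nil => intro s _; exact le_refl _
  | cons a T ih =>
    intro s hs
    cases T with
    | nil => exact le_refl _
    | cons b T' =>
      simp only [List.length_cons] at hs
      simp only [tw]
      exact add_le_add (hbd (s+1) (by omega) (by omega) a b)
        (ih (s+1) (by simp; omega))

lemma twalk_to_const (A : ℕ → Fin m → Fin m → EReal) (N : Fin m → Fin m → EReal) (k : ℕ)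
    (hbot : ∀ l, 1 ≤ l → l ≤ k → ∀ a b, A l a b ≠ ⊥ → N a b ≠ ⊥) :
    ∀ (L : List (Fin m)) (s : ℕ), s + L.length ≤ k + 1 → twalk A s L →
      twalk (fun _ => N) s L := by
  intro L
  induction L with
  | nil => intro s _ h; exact h
  | cons a T ih =>
    intro s hs h
    cases T with
    | nil => trivial
    | cons b T' =>
      simp only [List.length_cons] at hs
      simp only [twalk] at h ⊢
      exact ⟨hbot (s+1) (by omega) (by omega) a b h.1, ih (s+1) (by simp; omega) h.2⟩

lemma first_split {α : Type*} (x : α) :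
    ∀ L : List α, x ∈ L → ∃ P Q, L = P ++ x :: Q ∧ x ∉ P := by
  intro L
  induction L with
  | nil => simp
  | cons a T ih =>
    intro h
    by_cases hax : a = x
    · exact ⟨[], T, by simp [hax], by simp⟩
    · obtain ⟨P, Q, hPQ, hP⟩ := ih (by
        rcases List.mem_cons.mp h with h' | h'
        · exact absurd h'.symm hax
        · exact h')
      refine ⟨a :: P, Q, by simp [hPQ], ?_⟩
      simp only [List.mem_cons, not_or]
      exact ⟨fun h' => hax h'.symm, hP⟩

lemma head?_append_cons {α : Type*} (P : List α) (x : α) (L L' : List α) :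
    (P ++ x :: L).head? = (P ++ x :: L').head? := by
  cases P <;> simp


lemma segment_nonpos {n : ℕ} (A : ℕ → Fin (n+2) → Fin (n+2) → EReal)
    (Asup : Fin (n+2) → Fin (n+2) → EReal) (k : ℕ)
    (hbd : ∀ l, 1 ≤ l → l ≤ k → ∀ a b, A l a b ≤ Asup a b)
    (hone : ∀ l, 1 ≤ l → l ≤ k → A l 0 0 = 0)
    (hcyc : ∀ W, isCycle Asup W → (∃ v ∈ W, v ≠ 0) → wWeight Asup W < 0)
    (Q1 : List (Fin (n+2))) (hQ1 : (0 : Fin (n+2)) ∉ Q1) (s : ℕ)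
    (hlen : s + Q1.length + 2 ≤ k + 1)
    (hwalk : twalk A s ((0 : Fin (n+2)) :: (Q1 ++ [0]))) :
    tw A s ((0 : Fin (n+2)) :: (Q1 ++ [0])) ≤ 0 := by
  cases Q1 with
  | nil =>
    have h0 : A (s+1) 0 0 = 0 := hone (s+1) (by omega) (by omega)
    simp [tw, h0]
  | cons c Q1' =>
    set C : List (Fin (n+2)) := (0 : Fin (n+2)) :: ((c :: Q1') ++ [0]) with hC
    have hsl : s + C.length ≤ k + 1 := by
      simp only [List.length_cons] at hlen; simp [hC]; omega
    have h1 : tw A s C ≤ tw (fun _ => Asup) s C := tw_le_const A Asup k hbd C s hsl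
    have h2 : tw (fun _ => Asup) s C = wWeight Asup C := tw_shift Asup C s 0
    have hw : isWalk Asup C := twalk_shift Asup C s 0
      (twalk_to_const A Asup k (fun l hl1 hl2 a b hb h => hb (by
         have hle := hbd l hl1 hl2 a b; rw [h] at hle; exact le_bot_iff.mp hle))
        C s hsl hwalk)
    have hcast : C = ((0 : Fin (n+2)) :: c :: Q1') ++ [0] := by simp [hC]
    have hcycle : isCycle Asup C := by
      refine ⟨hw, by simp [hC], ?_⟩
      rw [hcast, List.getLast?_concat]
      simp
    have hne : ∃ v ∈ C, v ≠ 0 :=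
      ⟨c, by simp [hC], fun h => hQ1 (List.mem_cons.mpr (Or.inl h.symm))⟩
    calc tw A s C ≤ wWeight Asup C := h2 ▸ h1
      _ ≤ 0 := le_of_lt (hcyc C hcycle hne)

lemma final_case {n : ℕ} (A : ℕ → Fin (n+2) → Fin (n+2) → EReal) (k : ℕ) (j : Fin (n+2))
    (Q : List (Fin (n+2))) (s : ℕ)
    (hw : twalk A s ((0 : Fin (n+2)) :: Q)) (hs : s + Q.length = k)
    (hl : ((0 : Fin (n+2)) :: Q).getLast? = some j) (hQ : (0 : Fin (n+2)) ∉ Q) :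
    tw A s ((0 : Fin (n+2)) :: Q) ≤ vStar A 0 k j :=
  le_sSup ⟨s, (0 : Fin (n+2)) :: Q,
    ⟨hw, by simpa using hs, rfl, hl, fun v hv h => hQ (h ▸ hv)⟩, rfl⟩

lemma tail_bound {n : ℕ} (A : ℕ → Fin (n+2) → Fin (n+2) → EReal)
    (Asup : Fin (n+2) → Fin (n+2) → EReal) (k : ℕ)
    (hbd : ∀ l, 1 ≤ l → l ≤ k → ∀ a b, A l a b ≤ Asup a b)
    (hone : ∀ l, 1 ≤ l → l ≤ k → A l 0 0 = 0)
    (hbot : ∀ l, 1 ≤ l → l ≤ k → ∀ a b, A l a b ≠ ⊥ → Asup a b ≠ ⊥)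
    (hcyc : ∀ W, isCycle Asup W → (∃ v ∈ W, v ≠ 0) → wWeight Asup W < 0)
    (j : Fin (n+2)) :
    ∀ (N : ℕ) (Q : List (Fin (n+2))) (s : ℕ), Q.length ≤ N →
      twalk A s ((0 : Fin (n+2)) :: Q) → s + Q.length = k →
      ((0 : Fin (n+2)) :: Q).getLast? = some j →
      tw A s ((0 : Fin (n+2)) :: Q) ≤ vStar A 0 k j := by
  intro N
  induction N with
  | zero =>
    intro Q s hQN hw hs hl
    have hQ : Q = [] := List.eq_nil_of_length_eq_zero (Nat.le_zero.mp hQN)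
    subst hQ
    exact final_case A k j [] s hw hs hl (by simp)
  | succ N ih =>
    intro Q s hQN hw hs hl
    by_cases hmem : (0 : Fin (n+2)) ∈ Q
    · obtain ⟨Q1, Q2, rfl, hQ1⟩ := first_split 0 Q hmem
      have hlenQ : Q1.length + 1 + Q2.length = (Q1 ++ 0 :: Q2).length := by simp; omega
      have hw' : twalk A s (((0 : Fin (n+2)) :: Q1) ++ 0 :: Q2) := hw
      obtain ⟨hwseg, hwrest⟩ := twalk_split A ((0 : Fin (n+2)) :: Q1) 0 Q2 s hw'
      have hseg : tw A s (((0 : Fin (n+2)) :: Q1) ++ [0]) ≤ 0 :=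
        segment_nonpos A Asup k hbd hone hcyc Q1 hQ1 s (by omega) hwseg
      have hx : (((0 : Fin (n+2)) :: Q2).getLast?).isSome := by
        simp [List.getLast?_isSome]
      obtain ⟨x, hx⟩ := Option.isSome_iff_exists.mp hx
      have hl' : (((0 : Fin (n+2)) :: Q1) ++ (0 :: Q2)).getLast? = some j := hl
      rw [List.getLast?_append, hx] at hl'
      simp only [Option.some_or] at hl'  -- (some x).or _ = some x
      have hxj : x = j := by injection hl'
      rw [hxj] at hx
      have hrest : tw A (s + ((0 : Fin (n+2)) :: Q1).length) ((0 : Fin (n+2)) :: Q2) ≤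
          vStar A 0 k j := by
        apply ih Q2 (s + ((0 : Fin (n+2)) :: Q1).length)
        · have := hQN; simp at this; omega
        · exact hwrest
        · simp only [List.length_cons]; omega
        · exact hx
      calc tw A s (((0 : Fin (n+2)) :: Q1) ++ 0 :: Q2)
          = tw A s (((0 : Fin (n+2)) :: Q1) ++ [0]) +
            tw A (s + ((0 : Fin (n+2)) :: Q1).length) ((0 : Fin (n+2)) :: Q2) :=
            tw_split A ((0 : Fin (n+2)) :: Q1) 0 Q2 s
        _ ≤ 0 + vStar A 0 k j := add_le_add hseg hrest
        _ = vStar A 0 k j := zero_add _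
    · exact final_case A k j Q s hw hs hl hmem


/-- full walks through node `one` weigh at most `w_i* + v_j*`. -/
theorem rank_one_transient_statement14 {n : ℕ}
    (𝒳 : Set (Fin (n + 2) → Fin (n + 2) → EReal))
    (Asup Ainf : Fin (n + 2) → Fin (n + 2) → EReal)
    (hstand : Standing 𝒳 Asup Ainf 0)
    (k : ℕ) (hk : 1 ≤ k)
    (A : ℕ → Fin (n + 2) → Fin (n + 2) → EReal)
    (hA : ∀ l, 1 ≤ l → l ≤ k → A l ∈ 𝒳)
    (i j : Fin (n + 2)) :
    ∀ W, isFullWalk A k i j W → (0 : Fin (n + 2)) ∈ W →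
      tw A 0 W ≤ wStar A 0 k i + vStar A 0 k j := by
  obtain ⟨-, -, hsupdef, -, -, -, -, -, -, honeX, -, -, hsupcyc⟩ := hstand
  have hbd : ∀ l, 1 ≤ l → l ≤ k → ∀ a b, A l a b ≤ Asup a b := fun l h1 h2 a b => by
    rw [hsupdef]
    exact le_iSup₂ (f := fun (X : Fin (n+2) → Fin (n+2) → EReal) (_ : X ∈ 𝒳) => X a b)
      (A l) (hA l h1 h2)
  have hone : ∀ l, 1 ≤ l → l ≤ k → A l 0 0 = 0 := fun l h1 h2 => honeX _ (hA l h1 h2)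
  have hbot : ∀ l, 1 ≤ l → l ≤ k → ∀ a b, A l a b ≠ ⊥ → Asup a b ≠ ⊥ :=
    fun l h1 h2 a b hb h => hb (le_bot_iff.mp (h ▸ hbd l h1 h2 a b))
  intro W hfull hmem
  obtain ⟨hw, hlen, hhead, hlast⟩ := hfull
  obtain ⟨P, Q, rfl, hP⟩ := first_split 0 W hmem
  have hlen' : P.length + Q.length = k := by
    simp [List.length_append] at hlen; omega
  obtain ⟨hw1, hw2⟩ := twalk_split A P 0 Q 0 hw
  have hinit : isInitialWalk A 0 k i (P ++ [0]) := by
    refine ⟨hw1, ?_, ?_, ?_, ?_⟩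
    · simp; omega
    · rw [head?_append_cons P 0 [] Q]; exact hhead
    · exact List.getLast?_concat (l := P)
    · rw [List.dropLast_concat]; intro v hv h; exact hP (h ▸ hv)
  have h1 : tw A 0 (P ++ [0]) ≤ wStar A 0 k i := le_sSup ⟨P ++ [0], hinit, rfl⟩
  have hx : (((0 : Fin (n+2)) :: Q).getLast?).isSome := by simp [List.getLast?_isSome]
  obtain ⟨x, hx⟩ := Option.isSome_iff_exists.mp hx
  have hl2 : ((0 : Fin (n+2)) :: Q).getLast? = some j := by
    rw [List.getLast?_append, hx] at hlast
    simp only [Option.some_or] at hlast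
    have : x = j := by injection hlast
    rw [← this]; exact hx
  have h2 : tw A (0 + P.length) ((0 : Fin (n+2)) :: Q) ≤ vStar A 0 k j :=
    tail_bound A Asup k hbd hone hbot hsupcyc j Q.length Q (0 + P.length) (le_refl _)
      hw2 (by omega) hl2
  calc tw A 0 (P ++ 0 :: Q)
      = tw A 0 (P ++ [0]) + tw A (0 + P.length) ((0 : Fin (n+2)) :: Q) := tw_split A P 0 Q 0
    _ ≤ wStar A 0 k i + vStar A 0 k j := add_le_add h1 h2


end MaxPlusTransient
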